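/- Let m₀, i, m₁ : ℝ → ℝ → ℝ be continuous (m₁ independent of disease duration) with i ≥ 0, and let S₀ : ℝ → ℝ be continuous with S₀ > 0. Define S(t,a) := S₀(t−a)·exp(−∫₀ᵃ (m₀(t−a+τ,τ) + i(t−a+τ,τ)) dτ), C⋆(t,a) := ∫₀ᵃ i(t−δ, a−δ)·S(t−δ, a−δ)·exp(−∫₀^δ m₁(t−δ+τ, a−δ+τ) dτ) dδ, and the prevalence p(t,a) := C⋆(t,a)/(C⋆(t,a) + S(t,a)). Then for every t ∈ ℝ and a > 0, the function s ↦ p(t+s, a+s) has derivative (1 − p(t,a))·(i(t,a) − p(t,a)·(m₁(t,a) − m₀(t,a))) at s = 0. (The partial differential equation (∂ₜ+∂ₐ)p = (1−p)·(i − p·(m₁−m₀)) for the age-specific prevalence.) -/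

import Mathlib

/-- PDE for the age-specific prevalence in the duration-independent case:
`(∂ₜ+∂ₐ) p = (1 − p)·(i − p·(m₁ − m₀))`. -/
theorem keiding_prevalence_pde
    (m₀ i m₁ : ℝ → ℝ → ℝ)
    (hm₀ : Continuous fun q : ℝ × ℝ => m₀ q.1 q.2)
    (hi : Continuous fun q : ℝ × ℝ => i q.1 q.2)
    (hi_nonneg : ∀ t a : ℝ, 0 ≤ i t a)
    (hm₁ : Continuous fun q : ℝ × ℝ => m₁ q.1 q.2)
    (S₀ : ℝ → ℝ) (hS₀ : Continuous S₀) (hS₀_pos : ∀ u : ℝ, 0 < S₀ u)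
    (S : ℝ → ℝ → ℝ)
    (hS : ∀ t a : ℝ, S t a = S₀ (t - a) *
      Real.exp (-∫ τ in (0:ℝ)..a, (m₀ (t - a + τ) τ + i (t - a + τ) τ)))
    (Cstar : ℝ → ℝ → ℝ)
    (hCstar : ∀ t a : ℝ, Cstar t a =
      ∫ δ in (0:ℝ)..a, i (t - δ) (a - δ) * S (t - δ) (a - δ) *
        Real.exp (-∫ τ in (0:ℝ)..δ, m₁ (t - δ + τ) (a - δ + τ)))
    (p : ℝ → ℝ → ℝ)
    (hp : ∀ t a : ℝ, p t a = Cstar t a / (Cstar t a + S t a)) :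
    ∀ t a : ℝ, 0 < a →
      HasDerivAt (fun s : ℝ => p (t + s) (a + s))
        ((1 - p t a) * (i t a - p t a * (m₁ t a - m₀ t a))) 0 := by
  intro t a ha
  set c := t - a with hc
  -- one-variable helper functions along the characteristic
  set h₁ : ℝ → ℝ := fun u => m₁ (c + u) u with hh₁
  set h₀ : ℝ → ℝ := fun u => m₀ (c + u) u + i (c + u) u with hh₀
  have hcont_diag : Continuous fun u : ℝ => ((c + u, u) : ℝ × ℝ) := by continuity
  have hh₁c : Continuous h₁ := hm₁.comp hcont_diag
  have hic : Continuous fun u : ℝ => i (c + u) u := hi.comp hcont_diag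
  have hh₀c : Continuous h₀ := (hm₀.comp hcont_diag).add hic
  set M : ℝ → ℝ := fun x => ∫ u in (0:ℝ)..x, h₁ u with hM
  set N : ℝ → ℝ := fun x => ∫ u in (0:ℝ)..x, h₀ u with hN
  have hMc : Continuous M :=
    intervalIntegral.continuous_primitive (fun a b => hh₁c.intervalIntegrable a b) 0
  have hNc : Continuous N :=
    intervalIntegral.continuous_primitive (fun a b => hh₀c.intervalIntegrable a b) 0
  -- S along the characteristic
  have hSkey : ∀ A : ℝ, S (c + A) A = S₀ c * Real.exp (-N A) := by
    intro A
    rw [hS]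
    rw [show c + A - A = c by ring]
  set φ : ℝ → ℝ := fun σ => i (c + σ) σ * (S₀ c * Real.exp (-N σ)) * Real.exp (M σ) with hφ
  have hφc : Continuous φ :=
    (hic.mul (continuous_const.mul (hNc.neg.rexp))).mul (hMc.rexp)
  have hφ_nonneg : ∀ σ, 0 ≤ φ σ := by
    intro σ
    have := hi_nonneg (c + σ) σ
    have h1 : (0:ℝ) ≤ S₀ c * Real.exp (-N σ) :=
      le_of_lt (mul_pos (hS₀_pos c) (Real.exp_pos _))
    positivity
  set Φ : ℝ → ℝ := fun x => ∫ σ in (0:ℝ)..x, φ σ with hΦ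
  -- Cstar along the characteristic
  have hCkey : ∀ A : ℝ, Cstar (c + A) A = Real.exp (-M A) * Φ A := by
    intro A
    rw [hCstar]
    have hInt : ∀ δ : ℝ,
        i (c + A - δ) (A - δ) * S (c + A - δ) (A - δ) *
          Real.exp (-∫ τ in (0:ℝ)..δ, m₁ (c + A - δ + τ) (A - δ + τ))
        = Real.exp (-M A) * φ (A - δ) := by
      intro δ
      have h1 : (∫ τ in (0:ℝ)..δ, m₁ (c + A - δ + τ) (A - δ + τ)) = M A - M (A - δ) := by
        have e : ∀ τ : ℝ, m₁ (c + A - δ + τ) (A - δ + τ) = h₁ (τ + (A - δ)) := by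
          intro τ
          rw [hh₁]
          rw [show c + A - δ + τ = c + (τ + (A - δ)) by ring,
            show A - δ + τ = τ + (A - δ) by ring]
        calc (∫ τ in (0:ℝ)..δ, m₁ (c + A - δ + τ) (A - δ + τ))
            = ∫ τ in (0:ℝ)..δ, h₁ (τ + (A - δ)) := by
              refine intervalIntegral.integral_congr ?_
              intro τ _
              exact e τ
          _ = ∫ u in (0 + (A - δ))..(δ + (A - δ)), h₁ u :=
              intervalIntegral.integral_comp_add_right h₁ (A - δ)
          _ = ∫ u in (A - δ)..A, h₁ u := by norm_num
          _ = M A - M (A - δ) := by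
              rw [hM]
              exact (intervalIntegral.integral_interval_sub_left
                (hh₁c.intervalIntegrable 0 A) (hh₁c.intervalIntegrable 0 (A - δ))).symm
      have h2 : S (c + A - δ) (A - δ) = S₀ c * Real.exp (-N (A - δ)) := by
        rw [show c + A - δ = c + (A - δ) by ring]
        exact hSkey (A - δ)
      have h3 : i (c + A - δ) (A - δ) = i (c + (A - δ)) (A - δ) := by
        rw [show c + A - δ = c + (A - δ) by ring]
      rw [h1, h2, h3]
      simp only [hφ]
      rw [show -(M A - M (A - δ)) = -M A + M (A - δ) by ring, Real.exp_add]
      ring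
    calc (∫ δ in (0:ℝ)..A, i (c + A - δ) (A - δ) * S (c + A - δ) (A - δ) *
          Real.exp (-∫ τ in (0:ℝ)..δ, m₁ (c + A - δ + τ) (A - δ + τ)))
        = ∫ δ in (0:ℝ)..A, Real.exp (-M A) * φ (A - δ) := by
          exact intervalIntegral.integral_congr (fun δ _ => hInt δ)
      _ = Real.exp (-M A) * ∫ δ in (0:ℝ)..A, φ (A - δ) := by
          rw [intervalIntegral.integral_const_mul]
      _ = Real.exp (-M A) * ∫ σ in (A - A)..(A - 0), φ σ := by
          rw [intervalIntegral.integral_comp_sub_left φ A]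
      _ = Real.exp (-M A) * Φ A := by norm_num; rfl
  -- abbreviations at the base point
  set B : ℝ := S₀ c * Real.exp (-N a) with hB
  set G : ℝ := Real.exp (-M a) * Φ a with hG
  have hB_pos : 0 < B := mul_pos (hS₀_pos c) (Real.exp_pos _)
  have hG_nonneg : 0 ≤ G := by
    have : 0 ≤ Φ a := intervalIntegral.integral_nonneg ha.le (fun σ _ => hφ_nonneg σ)
    exact mul_nonneg (Real.exp_pos _).le this
  have hGB_pos : 0 < G + B := by linarith
  -- the function in question equals a nice function of s
  have hfun : (fun s : ℝ => p (t + s) (a + s)) =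
      fun s : ℝ => (Real.exp (-M (a + s)) * Φ (a + s)) /
        (Real.exp (-M (a + s)) * Φ (a + s) + S₀ c * Real.exp (-N (a + s))) := by
    funext s
    rw [hp]
    rw [show t + s = c + (a + s) by rw [hc]; ring]
    rw [hCkey (a + s), hSkey (a + s)]
  -- derivatives
  have hadd : HasDerivAt (fun s : ℝ => a + s) 1 0 := by
    simpa using (hasDerivAt_id (0:ℝ)).const_add a
  have hMd : HasDerivAt M (h₁ a) a := by
    rw [hM]
    exact intervalIntegral.integral_hasDerivAt_right (hh₁c.intervalIntegrable 0 a)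
      hh₁c.aestronglyMeasurable.stronglyMeasurableAtFilter hh₁c.continuousAt
  have hNd : HasDerivAt N (h₀ a) a := by
    rw [hN]
    exact intervalIntegral.integral_hasDerivAt_right (hh₀c.intervalIntegrable 0 a)
      hh₀c.aestronglyMeasurable.stronglyMeasurableAtFilter hh₀c.continuousAt
  have hΦd : HasDerivAt Φ (φ a) a := by
    rw [hΦ]
    exact intervalIntegral.integral_hasDerivAt_right (hφc.intervalIntegrable 0 a)
      hφc.aestronglyMeasurable.stronglyMeasurableAtFilter hφc.continuousAt
  have hMs : HasDerivAt (fun s : ℝ => M (a + s)) (h₁ a) 0 := by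
    have h' : HasDerivAt M (h₁ a) (a + 0) := by rw [add_zero]; exact hMd
    exact (h'.comp 0 hadd).congr_deriv (mul_one _)
  have hNs : HasDerivAt (fun s : ℝ => N (a + s)) (h₀ a) 0 := by
    have h' : HasDerivAt N (h₀ a) (a + 0) := by rw [add_zero]; exact hNd
    exact (h'.comp 0 hadd).congr_deriv (mul_one _)
  have hΦs : HasDerivAt (fun s : ℝ => Φ (a + s)) (φ a) 0 := by
    have h' : HasDerivAt Φ (φ a) (a + 0) := by rw [add_zero]; exact hΦd
    exact (h'.comp 0 hadd).congr_deriv (mul_one _)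
  -- g and f
  have hgd : HasDerivAt (fun s : ℝ => Real.exp (-M (a + s)) * Φ (a + s))
      (-h₁ a * G + Real.exp (-M a) * φ a) 0 := by
    have hexp : HasDerivAt (fun s : ℝ => Real.exp (-M (a + s)))
        (Real.exp (-M a) * -h₁ a) 0 := by
      have := (hMs.neg).exp
      simpa [mul_comm] using this
    have hmul := hexp.mul hΦs
    exact hmul.congr_deriv (by rw [hG]; simp only [add_zero]; ring)
  have hfd : HasDerivAt (fun s : ℝ => S₀ c * Real.exp (-N (a + s)))
      (-h₀ a * B) 0 := by
    have hexp : HasDerivAt (fun s : ℝ => Real.exp (-N (a + s)))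
        (Real.exp (-N a) * -h₀ a) 0 := by
      have := (hNs.neg).exp
      simpa [mul_comm] using this
    have hmul := hexp.const_mul (S₀ c)
    exact hmul.congr_deriv (by rw [hB]; ring)
  -- quotient rule
  have hsum : HasDerivAt (fun s : ℝ => Real.exp (-M (a + s)) * Φ (a + s) +
      S₀ c * Real.exp (-N (a + s))) ((-h₁ a * G + Real.exp (-M a) * φ a) + -h₀ a * B) 0 :=
    hgd.add hfd
  have hne : Real.exp (-M (a + 0)) * Φ (a + 0) + S₀ c * Real.exp (-N (a + 0)) ≠ 0 := by
    simpa [hG, hB] using hGB_pos.ne'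
  have hdiv := hgd.div hsum hne
  rw [hfun]
  refine hdiv.congr_deriv ?_
  symm
  -- value identities
  have hpv : p t a = G / (G + B) := by
    rw [hp, show t = c + a by rw [hc]; ring, hCkey a, hSkey a, hG, hB]
  have hiv : i t a = i (c + a) a := by rw [show t = c + a by rw [hc]; ring]
  have hm₁v : m₁ t a = m₁ (c + a) a := by rw [show t = c + a by rw [hc]; ring]
  have hm₀v : m₀ t a = m₀ (c + a) a := by rw [show t = c + a by rw [hc]; ring]
  have hφa : Real.exp (-M a) * φ a = i (c + a) a * B := by
    simp only [hφ, hB]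
    have h1 : Real.exp (-M a) * Real.exp (M a) = 1 := by
      rw [← Real.exp_add, neg_add_cancel, Real.exp_zero]
    linear_combination (i (c + a) a * (S₀ c * Real.exp (-N a))) * h1
  rw [hpv, hiv, hm₁v, hm₀v]
  simp only [add_zero]
  rw [← hG, ← hB, hφa, hh₁, hh₀]
  field_simp
  ring
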